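/- Let Q be a finite nonnegative measure and 𝒫 a nonempty set of nonnegative measures on a measurable space (Ω, ℱ). Then there is a unique decomposition Q = Q^r + Q^s into nonnegative measures such that Q^r ≪ 𝒫 (every 𝒫-negligible event is Q^r-null) and Q^s is singular, meaning there exists a 𝒫-negligible event N ∈ ℱ with Q^s(N^c) = 0. The event N is unique up to Q-null sets and P-null sets for all P ∈ 𝒫; in particular, any other 𝒫-negligible event N' satisfies Q(N' \ N) = 0. -/
import Mathlib


open MeasureTheory Set

variable {Ω : Type*} [MeasurableSpace Ω]

/-- An event is `Pfam`-negligible if it is null under every member of `Pfam`. -/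
def PNegl (Pfam : Set (Measure Ω)) (N : Set Ω) : Prop :=
  MeasurableSet N ∧ ∀ P ∈ Pfam, P N = 0

/-- Generalized Lebesgue decomposition of a finite measure `Q` with respect to a
nonempty family `Pfam` of nonnegative measures: `Q = Qr + Qs` with `Qr`
vanishing on all `Pfam`-negligible events and `Qs` carried by a
`Pfam`-negligible event `N`; the pair `(Qr, Qs)` is unique, and `N` is unique up
to `Q`-null and `P`-null sets; moreover any other `Pfam`-negligible `N'`
satisfies `Q(N' \ N) = 0`. -/
theorem generalized_lebesgue_decomposition
    (Q : Measure Ω) [IsFiniteMeasure Q]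
    (Pfam : Set (Measure Ω)) (hne : Pfam.Nonempty) :
    ∃ Qr Qs : Measure Ω, ∃ N : Set Ω,
      Q = Qr + Qs ∧
      (∀ M : Set Ω, PNegl Pfam M → Qr M = 0) ∧
      PNegl Pfam N ∧ Qs Nᶜ = 0 ∧
      (∀ Qr' Qs' : Measure Ω, ∀ N' : Set Ω,
        Q = Qr' + Qs' → (∀ M : Set Ω, PNegl Pfam M → Qr' M = 0) →
        PNegl Pfam N' → Qs' N'ᶜ = 0 →
        Qr' = Qr ∧ Qs' = Qs ∧ Q (symmDiff N N') = 0 ∧ ∀ P ∈ Pfam, P (symmDiff N N') = 0) ∧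
      (∀ N' : Set Ω, PNegl Pfam N' → Q (N' \ N) = 0) := by
  classical
  set T : Set ENNReal := Q '' {M | PNegl Pfam M} with hT
  have hTne : T.Nonempty := ⟨Q ∅, ⟨∅, ⟨MeasurableSet.empty, fun P _ => measure_empty⟩, rfl⟩⟩
  obtain ⟨u, hu_mono, hu_tendsto, hu_mem⟩ := exists_seq_tendsto_sSup hTne (OrderTop.bddAbove T)
  choose M hM hQM using hu_mem
  set N : Set Ω := ⋃ n, M n with hNdef
  have hNmeas : MeasurableSet N := MeasurableSet.iUnion fun n => (hM n).1
  have hNnegl : PNegl Pfam N := ⟨hNmeas, fun P hP => by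
    rw [measure_iUnion_null_iff]; exact fun n => (hM n).2 P hP⟩
  have hQN : Q N = sSup T := by
    refine le_antisymm (le_sSup ⟨N, hNnegl, rfl⟩) ?_
    refine le_of_tendsto hu_tendsto (Filter.Eventually.of_forall fun n => ?_)
    rw [← hQM n]; exact measure_mono (subset_iUnion M n)
  have key : ∀ N' : Set Ω, PNegl Pfam N' → Q (N' \ N) = 0 := by
    intro N' hN'
    have hmeas' := hN'.1
    have hunion : PNegl Pfam (N ∪ N') := ⟨hNmeas.union hmeas', fun P hP =>
      measure_union_null (hNnegl.2 P hP) (hN'.2 P hP)⟩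
    have h1 : Q (N ∪ N') ≤ Q N := hQN ▸ le_sSup ⟨_, hunion, rfl⟩
    have h2 : Q N + Q (N' \ N) ≤ Q N + 0 := by
      rw [add_zero]
      calc Q N + Q (N' \ N) = Q (N ∪ N' \ N) :=
            (measure_union disjoint_sdiff_self_right (hmeas'.diff hNmeas)).symm
        _ = Q (N ∪ N') := by rw [union_diff_self]
        _ ≤ Q N := h1
    have := (ENNReal.add_le_add_iff_left (measure_ne_top Q N)).mp h2
    exact le_antisymm this bot_le
  refine ⟨Q.restrict Nᶜ, Q.restrict N, N, ?_, ?_, hNnegl, ?_, ?_, key⟩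
  · have h := Measure.restrict_add_restrict_compl (μ := Q) hNmeas.compl
    rw [compl_compl] at h
    exact h.symm
  · intro M' hM'
    rw [Measure.restrict_apply hM'.1, ← Set.diff_eq]
    exact key M' hM'
  · rw [Measure.restrict_apply hNmeas.compl, compl_inter_self, measure_empty]
  · intro Qr' Qs' N' hdec hQr' hN' hQs'
    have hmeas' := hN'.1
    have happ : ∀ s : Set Ω, Q s = Qr' s + Qs' s := fun s => by
      rw [hdec, Measure.add_apply]
    have hN'' : PNegl Pfam (N ∪ N') := ⟨hNmeas.union hmeas', fun P hP =>
      measure_union_null (hNnegl.2 P hP) (hN'.2 P hP)⟩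
    have hNcn : (N ∪ N')ᶜ ⊆ N'ᶜ := compl_subset_compl.mpr subset_union_right
    have hkey' : Q (N' \ N) = 0 := key N' hN'
    -- Q (N \ N') = 0
    have hNsubdiff : Q (N \ N') = 0 := by
      have h1 : Qr' (N \ N') = 0 := measure_mono_null diff_subset (hQr' N hNnegl)
      have h2 : Qs' (N \ N') = 0 :=
        measure_mono_null (fun x hx hxN' => hx.2 hxN') hQs'
      rw [happ, h1, h2, add_zero]
    have hsymm : Q (symmDiff N N') = 0 := by
      rw [Set.symmDiff_def]
      exact measure_union_null hNsubdiff hkey'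
    have hPsymm : ∀ P ∈ Pfam, P (symmDiff N N') = 0 := fun P hP =>
      measure_mono_null symmDiff_subset_union (hN''.2 P hP)
    refine ⟨?_, ?_, hsymm, hPsymm⟩
    · ext A hA
      have h1 : Qr' (A \ (N ∪ N')) = Qr' A := measure_diff_null (hQr' _ hN'')
      have h2 : Qs' (A \ (N ∪ N')) = 0 :=
        measure_mono_null (fun x hx hxN' => hx.2 (Or.inr hxN')) hQs'
      have h3 : Q (A \ (N ∪ N')) = Qr' A := by rw [happ, h1, h2, add_zero]
      have h4 : Q (A \ (N ∪ N')) = Q (A \ N) := by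
        refine le_antisymm (measure_mono (diff_subset_diff_right subset_union_left)) ?_
        calc Q (A \ N) ≤ Q (A \ (N ∪ N') ∪ N' \ N) := measure_mono (by
              intro x hx
              by_cases hxN' : x ∈ N'
              · exact Or.inr ⟨hxN', hx.2⟩
              · exact Or.inl ⟨hx.1, fun h => h.elim hx.2 hxN'⟩)
          _ ≤ Q (A \ (N ∪ N')) + Q (N' \ N) := measure_union_le _ _
          _ = Q (A \ (N ∪ N')) := by rw [hkey', add_zero]
      rw [Measure.restrict_apply hA, ← Set.diff_eq, ← h4, h3]
    · ext A hA
      have h1 : Qs' (A ∩ (N ∪ N')) = Qs' A := by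
        have : Qs' (A \ (N ∪ N')ᶜ) = Qs' A :=
          measure_diff_null (measure_mono_null hNcn hQs')
        rwa [diff_compl] at this
      have h2 : Qr' (A ∩ (N ∪ N')) = 0 :=
        measure_mono_null inter_subset_right (hQr' _ hN'')
      have h3 : Q (A ∩ (N ∪ N')) = Qs' A := by rw [happ, h1, h2, zero_add]
      have h4 : Q (A ∩ (N ∪ N')) = Q (A ∩ N) := by
        refine le_antisymm ?_ (measure_mono (inter_subset_inter_right _ subset_union_left))
        calc Q (A ∩ (N ∪ N')) ≤ Q (A ∩ N ∪ N' \ N) := measure_mono (by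
              intro x hx
              by_cases hxN : x ∈ N
              · exact Or.inl ⟨hx.1, hxN⟩
              · exact Or.inr ⟨hx.2.elim (fun h => absurd h hxN) id, hxN⟩)
          _ ≤ Q (A ∩ N) + Q (N' \ N) := measure_union_le _ _
          _ = Q (A ∩ N) := by rw [hkey', add_zero]
      rw [Measure.restrict_apply hA, ← h4, h3]
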